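/- Let D₁, D₂, μ, ū, α be positive real numbers, λ > 0, φ̄ > 0, f′ ≠ 0, and set χ̄ = (D₁λ + μū)(D₂λ + α)/(f′ φ̄ λ). Consider the 2×2 real matrix M = [[−D₁λ − μū, λχ̄φ̄], [f′, −D₂λ − α]]. Then the vector (−λφ̄, 0) does NOT lie in the range of the linear map x ↦ M·x on ℝ². -/

import Mathlib

/-- Transversality condition: at the bifurcation value `χ̄`, the vector
`(−λφ̄, 0)` does not lie in the range of the projected linearization matrix
`M = [[−D₁λ − μū, λχ̄φ̄], [f′, −D₂λ − α]]`. -/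
theorem stmt10 (D₁ D₂ μ uBar α lam φBar f' : ℝ)
    (hD₁ : 0 < D₁) (hD₂ : 0 < D₂) (hμ : 0 < μ) (hu : 0 < uBar) (hα : 0 < α)
    (hlam : 0 < lam) (hφ : 0 < φBar) (hf' : f' ≠ 0)
    (χBar : ℝ)
    (hχ : χBar = (D₁ * lam + μ * uBar) * (D₂ * lam + α) / (f' * φBar * lam)) :
    ¬ ∃ x : Fin 2 → ℝ,
        Matrix.mulVec (!![-D₁ * lam - μ * uBar, lam * χBar * φBar;
                          f', -D₂ * lam - α]) x = ![-lam * φBar, 0] := by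
  rintro ⟨x, h⟩
  have h0 := congrFun h 0
  have h1 := congrFun h 1
  simp [Matrix.mulVec, dotProduct, Fin.sum_univ_two] at h0 h1
  subst hχ
  have hden : f' * φBar * lam ≠ 0 := by positivity
  field_simp at h0
  have h1' : f' * x 0 = (D₂ * lam + α) * x 1 := by linarith
  have h2 := congrArg (fun t => t * ((D₁ * lam + μ * uBar) * φBar * lam)) h1'
  have : lam * φBar * (f' * φBar * lam) = 0 := by linear_combination (φBar * lam) * (h0 + (D₁ * lam + μ * uBar) * h1')
  have : f' * (φBar * lam)^2 = 0 := by ring_nf; ring_nf at this; linarith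
  have hz : (φBar * lam)^2 ≠ 0 := by positivity
  rcases mul_eq_zero.mp this with h|h
  · exact hf' h
  · exact hz h
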